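/- Given n ≥ 3 pairwise distinct positive real numbers r_1, ..., r_n, there exist points v_1, ..., v_n in the plane with ‖v_i‖ = r_i for each i such that each v_i lies on the boundary of the convex hull of {v_1, ..., v_n} and the origin lies in the interior of that convex hull. -/

import Mathlib

open Real

lemma coord_le_norm (z : EuclideanSpace ℝ (Fin 2)) (i : Fin 2) : |z i| ≤ ‖z‖ := by
  rw [EuclideanSpace.norm_eq]
  rw [← Real.sqrt_sq (abs_nonneg (z i))]
  apply Real.sqrt_le_sqrt
  rw [sq_abs]
  have := Finset.single_le_sum (f := fun j => ‖z j‖^2) (fun j _ => sq_nonneg _) (Finset.mem_univ i)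
  simpa [Real.norm_eq_abs, sq_abs] using this

set_option maxHeartbeats 2000000 in
lemma mem_interior_of_combo {s : Set (EuclideanSpace ℝ (Fin 2))} (hs : Convex ℝ s)
    (p q w : EuclideanSpace ℝ (Fin 2)) (hp : p ∈ s) (hq : q ∈ s) (hw : w ∈ s)
    (α β γ : ℝ) (hα : 0 < α) (hβ : 0 < β) (hγ : 0 < γ) (hsum : α + β + γ = 1)
    (hcombo : α • p + β • q + γ • w = 0)
    (hdet : p 0 * q 1 - p 1 * q 0 ≠ 0) : (0:EuclideanSpace ℝ (Fin 2)) ∈ interior s := by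
  set Δ := p 0 * q 1 - p 1 * q 0 with hΔ
  have h0 : (0:EuclideanSpace ℝ (Fin 2)) ∈ s := by
    rw [← hcombo]
    have := hs.sum_mem (t := Finset.univ) (w := ![α, β, γ]) (z := ![p, q, w])
      (by intro i _; fin_cases i <;> simp [le_of_lt hα, le_of_lt hβ, le_of_lt hγ])
      (by simp [Fin.sum_univ_three]; linarith)
      (by intro i _; fin_cases i <;> simpa)
    simpa [Fin.sum_univ_three] using this
  have hΔpos0 : 0 < |Δ| := abs_pos.mpr hdet
  clear_value Δ
  set C : ℝ := (|q 0| + |q 1| + |p 0| + |p 1| + 1) / |Δ| + 1 with hC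
  have hΔpos : 0 < |Δ| := abs_pos.mpr hdet
  have hCpos : 0 < C := by positivity
  set ε : ℝ := min α β / (8 * C) with hε
  have hεpos : 0 < ε := by positivity
  clear_value C ε
  apply mem_interior.mpr
  refine ⟨Metric.ball 0 ε, ?_, Metric.isOpen_ball, Metric.mem_ball_self hεpos⟩
  intro z hz
  rw [mem_ball_zero_iff, hε] at hz
  set c₁ : ℝ := (z 0 * q 1 - z 1 * q 0) / Δ with hc₁
  set c₂ : ℝ := (p 0 * z 1 - p 1 * z 0) / Δ with hc₂
  clear_value c₁ c₂
  have hΔne : Δ ≠ 0 := hdet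
  have hzcomb : z = c₁ • p + c₂ • q := by
    ext i
    fin_cases i <;>
    · simp only [PiLp.add_apply, PiLp.smul_apply, smul_eq_mul, hc₁, hc₂, Fin.zero_eta, Fin.mk_one]
      field_simp
      rw [hΔ]; ring
  have hz0 := coord_le_norm z 0
  have hz1 := coord_le_norm z 1
  have hc₁bd : |c₁| ≤ C * ‖z‖ := by
    rw [hc₁, abs_div, div_le_iff₀ hΔpos]
    calc |z 0 * q 1 - z 1 * q 0| ≤ |z 0| * |q 1| + |z 1| * |q 0| := by
          calc _ ≤ |z 0 * q 1| + |z 1 * q 0| := abs_sub _ _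
            _ = _ := by rw [abs_mul, abs_mul]
      _ ≤ ‖z‖ * |q 1| + ‖z‖ * |q 0| := by gcongr
      _ ≤ C * ‖z‖ * |Δ| := by
          rw [hC]
          have h1 : |q 1| + |q 0| ≤ ((|q 0| + |q 1| + |p 0| + |p 1| + 1) / |Δ| + 1) * |Δ| := by
            rw [add_mul, div_mul_cancel₀ _ (ne_of_gt hΔpos)]
            have := abs_nonneg (p 0); have := abs_nonneg (p 1)
            nlinarith
          nlinarith [norm_nonneg z]
  have hc₂bd : |c₂| ≤ C * ‖z‖ := by
    rw [hc₂, abs_div, div_le_iff₀ hΔpos]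
    calc |p 0 * z 1 - p 1 * z 0| ≤ ‖z‖ * |p 0| + ‖z‖ * |p 1| := by
          calc _ ≤ |p 0 * z 1| + |p 1 * z 0| := abs_sub _ _
            _ = |z 1| * |p 0| + |z 0| * |p 1| := by rw [abs_mul, abs_mul]; ring
            _ ≤ _ := by gcongr
      _ ≤ C * ‖z‖ * |Δ| := by
          rw [hC]
          have h1 : |p 0| + |p 1| ≤ ((|q 0| + |q 1| + |p 0| + |p 1| + 1) / |Δ| + 1) * |Δ| := by
            rw [add_mul, div_mul_cancel₀ _ (ne_of_gt hΔpos)]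
            have := abs_nonneg (q 0); have := abs_nonneg (q 1)
            nlinarith
          nlinarith [norm_nonneg z]
  have hzC : C * ‖z‖ ≤ min α β / 8 := by
    calc C * ‖z‖ ≤ C * (min α β / (8 * C)) := by gcongr
      _ = min α β * C / (8 * C) := by ring
      _ = min α β / 8 := mul_div_mul_right _ _ (ne_of_gt hCpos)
  have hminα : min α β ≤ α := min_le_left _ _
  have hminβ : min α β ≤ β := min_le_right _ _
  have hminpos : 0 < min α β := lt_min hα hβ
  have hc₁' : |c₁| ≤ α / 8 := le_trans hc₁bd (le_trans hzC (by linarith))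
  have hc₂' : |c₂| ≤ β / 8 := le_trans hc₂bd (le_trans hzC (by linarith))
  have hc₁a := abs_le.mp hc₁'
  have hc₂a := abs_le.mp hc₂'
  set u₁ : ℝ := α/2 + c₁ with hu₁
  set u₂ : ℝ := β/2 + c₂ with hu₂
  set u₃ : ℝ := γ/2 with hu₃
  clear_value u₁ u₂ u₃
  have hu₁pos : 0 < u₁ := by rw [hu₁]; linarith [hc₁a.1]
  have hu₂pos : 0 < u₂ := by rw [hu₂]; linarith [hc₂a.1]
  have hu₃pos : 0 < u₃ := by rw [hu₃]; linarith
  have hσlt : u₁ + u₂ + u₃ < 1 := by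
    rw [hu₁, hu₂, hu₃]
    have hα1 : α ≤ 1 := by linarith
    have hβ1 : β ≤ 1 := by linarith
    linarith [hc₁a.2, hc₂a.2]
  have hzexp : z = u₁ • p + u₂ • q + u₃ • w + (1 - (u₁ + u₂ + u₃)) • (0:EuclideanSpace ℝ (Fin 2)) := by
    rw [smul_zero, add_zero, hu₁, hu₂, hu₃]
    have h2 : ((1:ℝ)/2) • (α • p + β • q + γ • w) = 0 := by rw [hcombo, smul_zero]
    calc z = c₁ • p + c₂ • q + ((1:ℝ)/2) • (α • p + β • q + γ • w) := by rw [h2, add_zero, hzcomb]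
      _ = _ := by
        simp only [smul_add, smul_smul, add_smul]
        ring_nf
        module
  rw [hzexp]
  have := hs.sum_mem (t := Finset.univ) (w := ![u₁, u₂, u₃, 1 - (u₁+u₂+u₃)]) (z := ![p, q, w, 0])
    (by intro i _; fin_cases i <;> simp <;> try linarith)
    (by simp [Fin.sum_univ_four]; try ring)
    (by intro i _; fin_cases i <;> simpa)
  simpa [Fin.sum_univ_four] using this

lemma sphere_frontier {T : Set (EuclideanSpace ℝ (Fin 2))} (cen : EuclideanSpace ℝ (Fin 2))
    (R : ℝ) (hR : 0 < R) (hT : T ⊆ Metric.closedBall cen R) {x : EuclideanSpace ℝ (Fin 2)}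
    (hx : x ∈ convexHull ℝ T) (hxc : dist x cen = R) :
    x ∈ frontier (convexHull ℝ T) := by
  refine ⟨subset_closure hx, ?_⟩
  intro hint
  have hsub : convexHull ℝ T ⊆ Metric.closedBall cen R :=
    convexHull_min hT (convex_closedBall cen R)
  have := interior_mono hsub hint
  rw [interior_closedBall cen (ne_of_gt hR)] at this
  rw [Metric.mem_ball, hxc] at this
  exact lt_irrefl _ this

lemma euclid_ext {u w : EuclideanSpace ℝ (Fin 2)} (h0 : u 0 = w 0) (h1 : u 1 = w 1) : u = w := by
  ext j
  fin_cases j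
  · exact h0
  · exact h1

set_option maxHeartbeats 2000000 in
theorem stmt1 (n : ℕ) (hn : 3 ≤ n) (r : Fin n → ℝ)
    (hpos : ∀ i, 0 < r i) (hdist : Function.Injective r) :
    ∃ v : Fin n → EuclideanSpace ℝ (Fin 2),
      (∀ i, ‖v i‖ = r i) ∧
      (∀ i, v i ∈ frontier (convexHull ℝ (Set.range v))) ∧
      (0 : EuclideanSpace ℝ (Fin 2)) ∈ interior (convexHull ℝ (Set.range v)) := by
  have hn0 : 0 < n := by omega
  -- minimum index
  obtain ⟨m1, -, hm1⟩ := Finset.exists_min_image Finset.univ r ⟨⟨0, hn0⟩, Finset.mem_univ _⟩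
  have hm1' : ∀ i, r m1 ≤ r i := fun i => hm1 i (Finset.mem_univ i)
  -- second minimum
  have hern : (Finset.univ.erase m1).Nonempty := by
    rw [← Finset.card_pos, Finset.card_erase_of_mem (Finset.mem_univ m1), Finset.card_univ,
      Fintype.card_fin]
    omega
  obtain ⟨m2, hm2mem, hm2⟩ := Finset.exists_min_image _ r hern
  have hm2ne : m2 ≠ m1 := Finset.ne_of_mem_erase hm2mem
  -- maximum
  obtain ⟨M, -, hM⟩ := Finset.exists_max_image Finset.univ r ⟨⟨0, hn0⟩, Finset.mem_univ _⟩
  have hM' : ∀ i, r i ≤ r M := fun i => hM i (Finset.mem_univ i)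
  -- a third index
  have hern2 : ((Finset.univ.erase m1).erase m2).Nonempty := by
    rw [← Finset.card_pos, Finset.card_erase_of_mem (Finset.mem_erase.mpr ⟨hm2ne, Finset.mem_univ _⟩),
      Finset.card_erase_of_mem (Finset.mem_univ m1), Finset.card_univ, Fintype.card_fin]
    omega
  obtain ⟨k, hkmem⟩ := hern2
  have hkm2 : k ≠ m2 := (Finset.mem_erase.mp hkmem).1
  have hkm1 : k ≠ m1 := (Finset.mem_erase.mp ((Finset.mem_erase.mp hkmem).2)).1
  set rs := r m1 with hrs
  set ra := r m2 with hra
  set rc := r M with hrc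
  clear_value rs ra rc
  have hspos : 0 < rs := hrs ▸ hpos m1
  have hapos : 0 < ra := hra ▸ hpos m2
  have hcpos : 0 < rc := hrc ▸ hpos M
  have hsa : rs < ra := by
    have h0 : rs ≤ ra := by rw [hra]; exact hm1' m2
    refine lt_of_le_of_ne h0 (fun h => ?_)
    rw [hrs, hra] at h
    exact hm2ne (hdist h).symm
  have hak : ra < r k := by
    refine lt_of_le_of_ne (hm2 k (Finset.mem_erase.mp hkmem).2) (fun h => ?_)
    rw [hra] at h
    exact hkm2 (hdist h.symm)
  have hac : ra < rc := lt_of_lt_of_le hak (hM' k)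
  have hMm2 : M ≠ m2 := by
    intro h
    rw [hra, ← h, ← hrc] at hac
    exact lt_irrefl _ hac
  have hm1m2 : m1 ≠ m2 := fun h => hm2ne h.symm
  -- parameters
  set eta := ra * (rc^2 - ra^2) / (8 * rc) with heta
  clear_value eta
  have hetapos : 0 < eta := by
    rw [heta]
    have : 0 < rc^2 - ra^2 := by nlinarith
    positivity
  have heta2 : eta ≤ (rc^2 - ra^2) / 2 := by
    rw [heta]
    rw [div_le_div_iff₀ (by positivity) (by norm_num)]
    have h1 : 0 ≤ rc^2 - ra^2 := by nlinarith
    have h2 : 0 ≤ 8*rc - 2*ra := by nlinarith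
    nlinarith [mul_nonneg h1 h2]
  set tt := ra^2 + eta with htt
  clear_value tt
  have httpos : 0 < tt := by rw [htt]; positivity
  have htlt : tt < rc^2 := by nlinarith
  set DD := tt/rs + rc + eta/ra + 1 with hDD
  clear_value DD
  have hDpos : 0 < DD := by rw [hDD]; positivity
  have hDc : rc ≤ DD := by
    rw [hDD]
    have h1 : 0 ≤ tt/rs := by positivity
    have h2 : 0 ≤ eta/ra := by positivity
    linarith
  have hDts : tt ≤ DD * rs := by
    have h0 : tt/rs ≤ DD := by
      rw [hDD]
      have h1 : 0 ≤ eta/ra := by positivity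
      linarith
    calc tt = (tt/rs) * rs := (div_mul_cancel₀ _ (ne_of_gt hspos)).symm
      _ ≤ DD * rs := mul_le_mul_of_nonneg_right h0 (le_of_lt hspos)
  have hDeta : eta ≤ DD * ra := by
    have h0 : eta/ra ≤ DD := by
      rw [hDD]
      have h1 : 0 ≤ tt/rs := by positivity
      linarith
    calc eta = (eta/ra) * ra := (div_mul_cancel₀ _ (ne_of_gt hapos)).symm
      _ ≤ DD * ra := mul_le_mul_of_nonneg_right h0 (le_of_lt hapos)
  set RR := Real.sqrt (tt + DD^2) with hRR
  clear_value RR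
  have hRsq : RR^2 = tt + DD^2 := hRR ▸ Real.sq_sqrt (by positivity)
  have hRpos : 0 < RR := hRR ▸ Real.sqrt_pos.mpr (by positivity)
  -- coordinates
  set x : Fin n → ℝ := fun i => (r i^2 - tt) / (2*DD) with hx
  set b : Fin n → ℝ := fun i => Real.sqrt (r i^2 - x i^2) with hb
  set y : Fin n → ℝ := fun i => if i = m2 then b i else -(b i) with hy
  have hxlt : ∀ i, x i < r i := by
    intro i
    simp only [hx]
    rw [div_lt_iff₀ (by positivity)]
    have h1 : r i ≤ rc := hM' i
    have h2 : 0 < r i := hpos i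
    nlinarith
  have hxgt : ∀ i, -(r i) < x i := by
    intro i
    simp only [hx]
    rw [lt_div_iff₀ (by positivity)]
    have h1 : rs ≤ r i := hm1' i
    have h2 : 0 < r i := hpos i
    nlinarith
  have hxsq : ∀ i, x i ^2 < r i ^2 := by
    intro i
    have h1 := hxlt i; have h2 := hxgt i
    nlinarith
  have hbsq : ∀ i, b i ^2 = r i^2 - x i^2 := by
    intro i
    rw [hb]
    exact Real.sq_sqrt (by nlinarith [hxsq i])
  have hbpos : ∀ i, 0 < b i := by
    intro i
    rw [hb]
    exact Real.sqrt_pos.mpr (by nlinarith [hxsq i])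
  have hble : ∀ i, b i ≤ r i := by
    intro i
    have h1 := hbsq i
    have h2 := hbpos i
    nlinarith [sq_nonneg (x i), hpos i]
  have hysq : ∀ i, y i ^2 = b i ^2 := by
    intro i
    rw [hy]
    by_cases h : i = m2 <;> simp [h]
  -- the points
  set v : Fin n → EuclideanSpace ℝ (Fin 2) :=
    fun i => (WithLp.equiv 2 (Fin 2 → ℝ)).symm ![x i, y i] with hv
  have hv0 : ∀ i, v i 0 = x i := by intro i; simp [hv]
  have hv1 : ∀ i, v i 1 = y i := by intro i; simp [hv]
  set cen : EuclideanSpace ℝ (Fin 2) := (WithLp.equiv 2 (Fin 2 → ℝ)).symm ![DD, 0] with hcen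
  have hcen0 : cen 0 = DD := by simp [hcen]
  have hcen1 : cen 1 = (0:ℝ) := by simp [hcen]
  -- norms
  have hnorm : ∀ i, ‖v i‖ = r i := by
    intro i
    rw [EuclideanSpace.norm_eq]
    rw [Fin.sum_univ_two, hv0, hv1]
    rw [Real.norm_eq_abs, Real.norm_eq_abs, sq_abs, sq_abs, hysq i, hbsq i]
    have : x i ^2 + (r i^2 - x i^2) = r i^2 := by ring
    rw [this, Real.sqrt_sq (le_of_lt (hpos i))]
  -- distance to center
  have hdistc : ∀ i, dist (v i) cen = RR := by
    intro i
    rw [EuclideanSpace.dist_eq]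
    rw [Fin.sum_univ_two, hv0, hv1, hcen0, hcen1, Real.dist_eq, Real.dist_eq, sq_abs, sq_abs]
    have h2D : 2 * DD * x i = r i^2 - tt := by
      simp only [hx]; field_simp
    have : (x i - DD)^2 + (y i - 0)^2 = tt + DD^2 := by
      rw [sub_zero, hysq i, hbsq i]
      nlinarith
    rw [this, hRR]
  -- range in closed ball
  have hrange : Set.range v ⊆ Metric.closedBall cen RR := by
    rintro _ ⟨i, rfl⟩
    rw [Metric.mem_closedBall, hdistc i]
  clear_value x b y v cen
  refine ⟨v, hnorm, ?_, ?_⟩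
  · intro i
    exact sphere_frontier cen RR hRpos hrange
      (subset_convexHull ℝ _ (Set.mem_range_self i)) (hdistc i)
  · -- interior
    have hxm2 : x m2 = -eta / (2*DD) := by
      simp only [hx, ← hra, htt]; ring_nf
    have hxm1neg : x m1 < 0 := by
      simp only [hx]
      apply div_neg_of_neg_of_pos _ (by positivity)
      have : rs^2 < ra^2 := by nlinarith
      rw [← hrs]; nlinarith
    have hxMpos : 0 < x M := by
      simp only [hx]
      apply div_pos _ (by positivity)
      rw [← hrc]; nlinarith
    have hxm2neg : x m2 < 0 := by
      rw [hxm2]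
      apply div_neg_of_neg_of_pos (by linarith) (by positivity)
    -- lower bound for b m2
    have hbm2 : ra/2 ≤ b m2 := by
      have h1 : x m2 ^2 ≤ ra^2/4 := by
        rw [hxm2]
        rw [div_pow, neg_pow]
        rw [div_le_div_iff₀ (by positivity) (by norm_num)]
        nlinarith [sq_nonneg eta, sq_nonneg DD]
      have h2 := hbsq m2
      have h3 := hbpos m2
      rw [← hra] at h2
      nlinarith
    have hxM : x M = (rc^2 - tt)/(2*DD) := by
      simp only [hx, ← hrc]
    have hbMle : b M ≤ rc := by rw [hrc]; exact hble M
    -- positivity of the two determinants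
    have hrcaux : 0 < ra * (rc^2 - ra^2) := by nlinarith
    have hkey : 0 < b m2 * (rc^2 - tt) - b M * eta := by
      have e1 : (rc^2 - ra^2)/2 ≤ rc^2 - tt := by rw [htt]; linarith [heta2]
      have e2 : rc * eta = ra * (rc^2 - ra^2) / 8 := by
        rw [heta]; field_simp
      have e3 : (ra/2) * ((rc^2-ra^2)/2) ≤ b m2 * (rc^2 - tt) := by
        apply mul_le_mul hbm2 e1 (by nlinarith) (le_of_lt (hbpos m2))
      have e4 : b M * eta ≤ rc * eta := mul_le_mul_of_nonneg_right hbMle (le_of_lt hetapos)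
      have e5 : (ra/2) * ((rc^2-ra^2)/2) = ra * (rc^2 - ra^2) / 4 := by ring
      linarith
    set Nv := b m2 * x M + b M * x m2 with hNv
    clear_value Nv
    have hNvpos : 0 < Nv := by
      have hrepr : Nv = (b m2 * (rc^2 - tt) - b M * eta)/(2*DD) := by
        rw [hNv, hxM, hxm2]; field_simp; ring
      rw [hrepr]
      exact div_pos hkey (by positivity)
    set Ad := -(b m1 * x m2 + b m2 * x m1) with hAd
    clear_value Ad
    have hAdpos : 0 < Ad := by
      rw [hAd]
      nlinarith [mul_pos (hbpos m1) (neg_pos.mpr hxm2neg), mul_pos (hbpos m2) (neg_pos.mpr hxm1neg)]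
    set Bc := Nv / Ad with hBc
    clear_value Bc
    have hBcpos : 0 < Bc := by rw [hBc]; exact div_pos hNvpos hAdpos
    set Ac := (b m1 * Bc + b M) / b m2 with hAc
    clear_value Ac
    have hAcpos : 0 < Ac := by
      rw [hAc]
      apply div_pos _ (hbpos m2)
      nlinarith [hbpos m1, hbpos M]
    have e2 : Ac * b m2 - Bc * b m1 - b M = 0 := by
      rw [hAc]
      field_simp [ne_of_gt (hbpos m2)]
      ring
    have e1 : Ac * x m2 + Bc * x m1 + x M = 0 := by
      have hBA : Bc * Ad = Nv := by rw [hBc]; exact div_mul_cancel₀ _ (ne_of_gt hAdpos)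
      have h5 : b m2 * (Ac * x m2 + Bc * x m1 + x M) = 0 := by
        have hAcb : Ac * b m2 = b m1 * Bc + b M := by
          rw [hAc]; exact div_mul_cancel₀ _ (ne_of_gt (hbpos m2))
        rw [hAd, hNv] at hBA
        linear_combination x m2 * hAcb - hBA
      rcases mul_eq_zero.mp h5 with h | h
      · exact absurd h (ne_of_gt (hbpos m2))
      · exact h
    set S := Ac + Bc + 1 with hS
    clear_value S
    have hSpos : 0 < S := by rw [hS]; linarith
    have hSne : S ≠ 0 := ne_of_gt hSpos
    have hym2 : y m2 = b m2 := by simp [hy]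
    have hym1 : y m1 = -(b m1) := by simp [hy, hm1m2]
    have hyM : y M = -(b M) := by simp [hy, hMm2]
    apply mem_interior_of_combo (convex_convexHull ℝ _) (v m2) (v m1) (v M)
      (subset_convexHull ℝ _ (Set.mem_range_self m2))
      (subset_convexHull ℝ _ (Set.mem_range_self m1))
      (subset_convexHull ℝ _ (Set.mem_range_self M))
      (Ac/S) (Bc/S) (1/S)
      (by positivity) (by positivity) (by positivity)
      (by field_simp; linarith [hS])
      ?_ ?_
    · refine euclid_ext ?_ ?_
      · simp only [PiLp.add_apply, PiLp.smul_apply, PiLp.zero_apply, smul_eq_mul, hv0]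
        linear_combination (1/S) * e1
      · simp only [PiLp.add_apply, PiLp.smul_apply, PiLp.zero_apply, smul_eq_mul, hv1,
          hym2, hym1, hyM]
        linear_combination (1/S) * e2
    · rw [hv0, hv1, hv0, hv1, hym2, hym1]
      have : x m2 * -(b m1) - b m2 * x m1 = Ad := by rw [hAd]; ring
      rw [this]
      exact ne_of_gt hAdpos
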